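/- Let α be a topological space, I an admissible ideal on ℕ, and η : ℕ → α a sequence. Then every I-limit point of η is an I-cluster point of η; that is, the set of I-limit points of η is contained in the set of I-cluster points of η. -/

import Mathlib

/-- An ideal on ℕ: a collection of subsets of ℕ containing ∅,
closed under subsets and finite unions. -/
structure IsIdeal (I : Set (Set ℕ)) : Prop where
  empty_mem : (∅ : Set ℕ) ∈ I
  subset_mem : ∀ {A B : Set ℕ}, A ∈ I → B ⊆ A → B ∈ I
  union_mem : ∀ {A B : Set ℕ}, A ∈ I → B ∈ I → A ∪ B ∈ I

/-- A non-trivial ideal: an ideal with I ≠ {∅} and ℕ ∉ I. -/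
def IsNonTrivialIdeal (I : Set (Set ℕ)) : Prop :=
  IsIdeal I ∧ I ≠ {∅} ∧ (Set.univ : Set ℕ) ∉ I

/-- An admissible ideal: a non-trivial ideal containing every singleton. -/
def IsAdmissibleIdeal (I : Set (Set ℕ)) : Prop :=
  IsNonTrivialIdeal I ∧ ∀ n : ℕ, ({n} : Set ℕ) ∈ I

variable {α : Type*} [TopologicalSpace α]

/-- A sequence η is I-convergent to x if for every neighborhood U of x,
the set {n | η n ∉ U} belongs to I. -/
def IConv (I : Set (Set ℕ)) (η : ℕ → α) (x : α) : Prop :=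
  ∀ U ∈ nhds x, {n : ℕ | η n ∉ U} ∈ I

/-- A sequence η is I*-convergent to x if there is P ⊆ ℕ with ℕ \ P ∈ I such that
the subsequence indexed by P converges to x (for every neighborhood U of x,
{n ∈ P | η n ∉ U} is finite). -/
def IStarConv (I : Set (Set ℕ)) (η : ℕ → α) (x : α) : Prop :=
  ∃ P : Set ℕ, Pᶜ ∈ I ∧ ∀ U ∈ nhds x, {n : ℕ | n ∈ P ∧ η n ∉ U}.Finite

/-- x is an I-limit point of η if there exists P ∉ I such that the subsequence
of η indexed by P converges to x. -/
def IsILimitPt (I : Set (Set ℕ)) (η : ℕ → α) (x : α) : Prop :=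
  ∃ P : Set ℕ, P ∉ I ∧ ∀ U ∈ nhds x, {n : ℕ | n ∈ P ∧ η n ∉ U}.Finite

/-- x is an I-cluster point of η if for every neighborhood U of x,
{n | η n ∈ U} ∉ I. -/
def IsIClusterPt (I : Set (Set ℕ)) (η : ℕ → α) (x : α) : Prop :=
  ∀ U ∈ nhds x, {n : ℕ | η n ∈ U} ∉ I

/-- Condition (AP): for every countable family of pairwise disjoint sets in I there
is a countable family K with each symmetric difference Hᵢ Δ Kᵢ finite and ⋃ Kᵢ ∈ I. -/
def APCondition (I : Set (Set ℕ)) : Prop :=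
  ∀ H : ℕ → Set ℕ, (∀ i, H i ∈ I) → Pairwise (Function.onFun Disjoint H) →
    ∃ K : ℕ → Set ℕ, (∀ i, (symmDiff (H i) (K i)).Finite) ∧ (⋃ i, K i) ∈ I

lemma finite_mem_of_admissible {I : Set (Set ℕ)} (hI : IsAdmissibleIdeal I)
    {S : Set ℕ} (hS : S.Finite) : S ∈ I := by
  obtain ⟨⟨hIdeal, _, _⟩, hsing⟩ := hI
  have : S = ↑hS.toFinset := by simp
  rw [this]
  generalize hS.toFinset = T
  induction T using Finset.induction_on with
  | empty => simpa using hIdeal.empty_mem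
  | insert _ _ _ ih =>
    rw [Finset.coe_insert, Set.insert_eq]
    exact hIdeal.union_mem (hsing _) ih

theorem stmt_8 (I : Set (Set ℕ)) (hI : IsAdmissibleIdeal I) (η : ℕ → α) :
    {x : α | IsILimitPt I η x} ⊆ {x : α | IsIClusterPt I η x} := by
  intro x hx U hU hmem
  obtain ⟨P, hP, hconv⟩ := hx
  have hfin := hconv U hU
  apply hP
  have hIdeal := hI.1.1
  have : P ⊆ {n : ℕ | η n ∈ U} ∪ {n : ℕ | n ∈ P ∧ η n ∉ U} := by
    intro n hn
    by_cases h : η n ∈ U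
    · exact Or.inl h
    · exact Or.inr ⟨hn, h⟩
  exact hIdeal.subset_mem
    (hIdeal.union_mem hmem (finite_mem_of_admissible hI hfin)) this
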